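/- Best rational approximants to even functions are even: Let B > 0, let f : [−B,B] → ℝ be continuous with f(−x) = f(x) for all x ∈ [−B,B], and let m, n be nonnegative integers. If R is a best approximant of type (n,m) to f on [−B,B], then R(−x) = R(x) for every x ∈ [−B,B]. -/

import Mathlib

open Polynomial Set

/-- A rational function of type (n,m) on [A,B]. -/
def IsRatFun (A B : ℝ) (n m : ℕ) (R : ℝ → ℝ) : Prop :=
  ∃ P Q : Polynomial ℝ, P.natDegree ≤ n ∧ Q.natDegree ≤ m ∧
    (∀ x ∈ Set.Icc A B, Q.eval x ≠ 0) ∧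
    ∀ x ∈ Set.Icc A B, R x = P.eval x / Q.eval x

/-- R is a best approximant of type (n,m) to f on [A,B]. -/
def IsBestApprox (A B : ℝ) (n m : ℕ) (f R : ℝ → ℝ) : Prop :=
  IsRatFun A B n m R ∧
    ∀ S : ℝ → ℝ, IsRatFun A B n m S →
      (⨆ y : Set.Icc A B, |f y.1 - R y.1|) ≤ ⨆ y : Set.Icc A B, |f y.1 - S y.1|

private lemma poly_sign_const {Q : Polynomial ℝ} {s : Set ℝ} (hs : IsPreconnected s)
    (h : ∀ x ∈ s, Q.eval x ≠ 0) :
    (∀ x ∈ s, 0 < Q.eval x) ∨ (∀ x ∈ s, Q.eval x < 0) := by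
  by_contra hc
  push_neg at hc
  obtain ⟨⟨x, hx, hx'⟩, ⟨y, hy, hy'⟩⟩ := hc
  have hxneg : Q.eval x < 0 := lt_of_le_of_ne hx' (h x hx)
  have hypos : 0 < Q.eval y := lt_of_le_of_ne (by linarith [hy']) (Ne.symm (h y hy))
  obtain ⟨z, hz, hz'⟩ := hs.intermediate_value hx hy (Polynomial.continuous Q).continuousOn
    ⟨hxneg.le, hypos.le⟩
  exact h z hz hz'

private lemma conv_eq {u v E l : ℝ} (hu : |u| ≤ E) (hv : |v| ≤ E) (h0 : 0 < l) (h1 : l < 1)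
    (h : E ≤ |l * u + (1 - l) * v|) : u = v := by
  obtain ⟨hu1, hu2⟩ := abs_le.mp hu
  obtain ⟨hv1, hv2⟩ := abs_le.mp hv
  rcases le_abs.mp h with h' | h'
  · have key : l * (E - u) + (1 - l) * (E - v) ≤ 0 := by nlinarith
    have t1 : 0 ≤ l * (E - u) := mul_nonneg h0.le (by linarith)
    have t2 : 0 ≤ (1 - l) * (E - v) := mul_nonneg (by linarith) (by linarith)
    have e1 : l * (E - u) = 0 := le_antisymm (by linarith) t1
    have e2 : (1 - l) * (E - v) = 0 := le_antisymm (by linarith) t2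
    have : E - u = 0 := by
      rcases mul_eq_zero.mp e1 with h'' | h'' <;> [exact absurd h'' (ne_of_gt h0); exact h'']
    have : E - v = 0 := by
      rcases mul_eq_zero.mp e2 with h'' | h'' <;> [linarith; exact h'']
    linarith
  · have key : l * (E + u) + (1 - l) * (E + v) ≤ 0 := by nlinarith
    have t1 : 0 ≤ l * (E + u) := mul_nonneg h0.le (by linarith)
    have t2 : 0 ≤ (1 - l) * (E + v) := mul_nonneg (by linarith) (by linarith)
    have e1 : l * (E + u) = 0 := le_antisymm (by linarith) t1
    have e2 : (1 - l) * (E + v) = 0 := le_antisymm (by linarith) t2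
    have : E + u = 0 := by
      rcases mul_eq_zero.mp e1 with h'' | h'' <;> [exact absurd h'' (ne_of_gt h0); exact h'']
    have : E + v = 0 := by
      rcases mul_eq_zero.mp e2 with h'' | h'' <;> [linarith; exact h'']
    linarith

private lemma abs_sub_le_of_same_sign {u w E g : ℝ} (h1 : |u| ≤ E) (h2 : 0 < u * w)
    (h3 : g ≤ |w|) (h4 : |w| ≤ E - g) : |u - w| ≤ E - g := by
  obtain ⟨hu1, hu2⟩ := abs_le.mp h1
  rcases lt_trichotomy u 0 with hu | hu | hu
  · have hw : w < 0 := by nlinarith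
    have : |w| = -w := abs_of_neg hw
    rw [abs_le]; constructor <;> nlinarith
  · simp [hu] at h2
  · have hw : 0 < w := by nlinarith
    have : |w| = w := abs_of_pos hw
    rw [abs_le]; constructor <;> nlinarith

private lemma bez_aux {A₁ B₁ h : Polynomial ℝ} {n m : ℕ} (hcop : IsCoprime A₁ B₁)
    (hB₁ : B₁ ≠ 0) (hν : A₁.natDegree ≤ n) (hμ : B₁.natDegree ≤ m)
    (hh : h.natDegree < n + B₁.natDegree) :
    ∃ p q : Polynomial ℝ, p.natDegree ≤ n ∧ q.natDegree ≤ m ∧ p * B₁ - q * A₁ = h := by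
  obtain ⟨a, b, hab⟩ := hcop
  set c := B₁.leadingCoeff with hc
  have hc0 : c ≠ 0 := leadingCoeff_ne_zero.mpr hB₁
  set M := B₁ * C c⁻¹ with hM
  have hMm : M.Monic := monic_mul_leadingCoeff_inv hB₁
  set v := -(h * a) with hv
  set r := v %ₘ M with hr
  set s := C c⁻¹ * (v /ₘ M) with hs
  have hvr : v = r + B₁ * s := by
    have h1 := modByMonic_add_div v M
    calc v = v %ₘ M + M * (v /ₘ M) := h1.symm
    _ = r + B₁ * s := by rw [hr, hs, hM]; ring
  set p := h * b - s * A₁ with hp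
  have key : p * B₁ - r * A₁ = h := by
    have h1 : a * A₁ + b * B₁ = 1 := hab
    have h2 : -(h * a) = r + B₁ * s := hvr
    have : p * B₁ - r * A₁ = h * (a * A₁ + b * B₁) + (-(h*a) - r - B₁ * s) * A₁ := by
      rw [hp]; ring
    rw [this, h1, h2]; ring
  have hrdeg : r.degree < B₁.degree := by
    have h1 : r.degree < M.degree := degree_modByMonic_lt v hMm
    have h2 : M.degree = B₁.degree := by
      rw [hM]
      exact degree_mul_leadingCoeff_inv B₁ hB₁
    rwa [h2] at h1
  have hrnat : r = 0 ∨ r.natDegree < B₁.natDegree := by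
    by_cases h0 : r = 0
    · exact Or.inl h0
    · exact Or.inr (natDegree_lt_natDegree h0 hrdeg)
  have hqm : r.natDegree ≤ m := by
    rcases hrnat with h0 | h0
    · simp [h0]
    · omega
  have hpn : p.natDegree ≤ n := by
    by_cases hp0 : p = 0
    · simp [hp0]
    · have hmul : p * B₁ = h + r * A₁ := by rw [← key]; ring
      have hdmul : (p * B₁).natDegree = p.natDegree + B₁.natDegree :=
        natDegree_mul hp0 hB₁
      have hbound : (h + r * A₁).natDegree < n + B₁.natDegree := by
        apply lt_of_le_of_lt (natDegree_add_le _ _)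
        apply max_lt hh
        rcases hrnat with h0 | h0
        · simp [h0]; omega
        · apply lt_of_le_of_lt (natDegree_mul_le)
          omega
      rw [hmul] at hdmul
      omega
  exact ⟨p, r, hpn, hqm, key⟩

private lemma bez_main {P₁ Q₁ P Q N h : Polynomial ℝ} {n m : ℕ}
    (hcop : IsCoprime P₁ Q₁) (hQ₁ : Q₁ ≠ 0)
    (hν : P₁.natDegree ≤ n) (hμ : Q₁.natDegree ≤ m)
    (hPn : P.natDegree ≤ n) (hQm : Q.natDegree ≤ m)
    (hNdef : N = P * Q₁ - P₁ * Q) (hN : N ≠ 0)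
    (hh : h = 0 ∨ h.natDegree < N.natDegree) :
    ∃ p q : Polynomial ℝ, p.natDegree ≤ n ∧ q.natDegree ≤ m ∧ p * Q₁ - q * P₁ = h := by
  rcases hh with rfl | hh
  · exact ⟨0, 0, by simp, by simp, by simp⟩
  by_cases hP₁0 : P₁ = 0
  · have hu : IsUnit Q₁ := isCoprime_zero_left.mp (hP₁0 ▸ hcop)
    obtain ⟨c, hcu, hcQ⟩ := Polynomial.isUnit_iff.mp hu
    have hc0 : c ≠ 0 := hcu.ne_zero
    have hNP : N = P * Q₁ := by rw [hNdef, hP₁0]; ring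
    have hP0 : P ≠ 0 := by rintro rfl; rw [hNP] at hN; simp at hN
    have hNdeg : N.natDegree ≤ n := by
      rw [hNP, natDegree_mul hP0 hQ₁, ← hcQ, natDegree_C]
      omega
    refine ⟨C c⁻¹ * h, 0, ?_, by simp, ?_⟩
    · exact le_trans (natDegree_C_mul_le _ _) (by omega)
    · rw [← hcQ]
      rw [hP₁0]
      rw [mul_comm (C c⁻¹) h, mul_assoc, ← C_mul, inv_mul_cancel₀ hc0]
      simp
  · have hNbound : N.natDegree ≤ max (n + Q₁.natDegree) (m + P₁.natDegree) := by
      rw [hNdef]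
      apply le_trans (natDegree_sub_le _ _)
      apply max_le_max
      · exact le_trans natDegree_mul_le (by omega)
      · rw [mul_comm]
        exact le_trans natDegree_mul_le (by omega)
    rcases le_or_gt (m + P₁.natDegree) (n + Q₁.natDegree) with hcase | hcase
    · have : h.natDegree < n + Q₁.natDegree := by omega
      exact bez_aux hcop hQ₁ hν hμ this
    · have hlt : (-h).natDegree < m + P₁.natDegree := by
        rw [natDegree_neg]; omega
      obtain ⟨p', q', hp', hq', hkey⟩ := bez_aux hcop.symm hP₁0 hμ hν hlt
      exact ⟨q', p', hq', hp', by linear_combination -hkey⟩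

set_option maxHeartbeats 1000000 in
/-- Best rational approximants to even functions are even. -/
theorem best_approx_of_even_is_even
    (B : ℝ) (hB : 0 < B) (f : ℝ → ℝ) (hf : ContinuousOn f (Set.Icc (-B) B))
    (hfeven : ∀ x ∈ Set.Icc (-B) B, f (-x) = f x)
    (m n : ℕ) (R : ℝ → ℝ) (hR : IsBestApprox (-B) B n m f R) :
    ∀ x ∈ Set.Icc (-B) B, R (-x) = R x := by
  obtain ⟨hRrat, hbest⟩ := hR
  set I : Set ℝ := Set.Icc (-B) B with hIdef
  have h0I : (0:ℝ) ∈ I := by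
    rw [hIdef]; constructor <;> linarith
  have hsym : ∀ x ∈ I, -x ∈ I := by
    intro x hx
    rw [hIdef] at hx ⊢
    obtain ⟨h1, h2⟩ := hx
    constructor <;> linarith
  have hIpc : IsPreconnected I := isPreconnected_Icc
  have hIcp : IsCompact I := isCompact_Icc
  have hIne : I.Nonempty := ⟨0, h0I⟩
  haveI : Nonempty I := hIne.to_subtype
  -- get a representation with positive denominator
  obtain ⟨P, Q, hPn, hQm, hQpos, hRPQ⟩ :
      ∃ P Q : Polynomial ℝ, P.natDegree ≤ n ∧ Q.natDegree ≤ m ∧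
        (∀ x ∈ I, 0 < Q.eval x) ∧ (∀ x ∈ I, R x = P.eval x / Q.eval x) := by
    obtain ⟨P₀, Q₀, h1, h2, h3, h4⟩ := hRrat
    rcases poly_sign_const hIpc h3 with hp | hn
    · exact ⟨P₀, Q₀, h1, h2, hp, h4⟩
    · refine ⟨-P₀, -Q₀, by simpa using h1, by simpa using h2, ?_, ?_⟩
      · intro x hx; rw [eval_neg]; linarith [hn x hx]
      · intro x hx; rw [h4 x hx, eval_neg, eval_neg, neg_div_neg_eq]
  set E := (⨆ y : I, |f y.1 - R y.1|) with hEdef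
  -- boundedness and pointwise bound
  have hbddR : BddAbove (Set.range fun y : I => |f y.1 - R y.1|) := by
    have hcont : ContinuousOn (fun x => |f x - P.eval x / Q.eval x|) I :=
      (hf.sub (((Polynomial.continuous P).continuousOn).div
        ((Polynomial.continuous Q).continuousOn) (fun x hx => (hQpos x hx).ne'))).abs
    obtain ⟨Cb, hCb⟩ := hIcp.exists_bound_of_continuousOn hcont
    refine ⟨Cb, ?_⟩
    rintro z ⟨y, rfl⟩
    show |f y.1 - R y.1| ≤ Cb
    rw [hRPQ y.1 y.2]
    have h2 := hCb y.1 y.2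
    rw [Real.norm_eq_abs, abs_abs] at h2
    exact h2
  have hEpt : ∀ x ∈ I, |f x - R x| ≤ E := by
    intro x hx
    exact le_ciSup hbddR ⟨x, hx⟩
  have hE0 : 0 ≤ E := le_trans (abs_nonneg _) (hEpt 0 h0I)
  rcases eq_or_lt_of_le hE0 with hEzero | hEpos
  · -- E = 0 : R coincides with f on I
    intro x hx
    have hx' := hsym x hx
    have h1 : R x = f x := by
      have ha := hEpt x hx; rw [← hEzero] at ha
      have hb' := abs_nonpos_iff.mp ha; linarith
    have h2 : R (-x) = f (-x) := by
      have ha := hEpt (-x) hx'; rw [← hEzero] at ha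
      have hb' := abs_nonpos_iff.mp ha; linarith
    rw [h1, h2, hfeven x hx]
  -- now E > 0
  -- symmetrized polynomials
  set Pe := P + P.comp (-X : Polynomial ℝ) with hPedef
  set Qe := Q + Q.comp (-X : Polynomial ℝ) with hQedef
  have hcompdeg : ∀ T : Polynomial ℝ, (T.comp (-X : Polynomial ℝ)).natDegree = T.natDegree := by
    intro T
    rw [natDegree_comp]
    simp
  have hPeval : ∀ x, Pe.eval x = P.eval x + P.eval (-x) := by
    intro x; rw [hPedef]; simp [eval_comp]
  have hQeval : ∀ x, Qe.eval x = Q.eval x + Q.eval (-x) := by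
    intro x; rw [hQedef]; simp [eval_comp]
  have hPedeg : Pe.natDegree ≤ n :=
    le_trans (natDegree_add_le _ _) (max_le hPn (by rw [hcompdeg]; exact hPn))
  have hQedeg : Qe.natDegree ≤ m :=
    le_trans (natDegree_add_le _ _) (max_le hQm (by rw [hcompdeg]; exact hQm))
  have hQepos : ∀ x ∈ I, 0 < Qe.eval x := by
    intro x hx; rw [hQeval]
    exact add_pos (hQpos x hx) (hQpos _ (hsym x hx))
  have hPeeven : ∀ x, Pe.eval (-x) = Pe.eval x := by
    intro x; rw [hPeval, hPeval, neg_neg]; ring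
  have hQeeven : ∀ x, Qe.eval (-x) = Qe.eval x := by
    intro x; rw [hQeval, hQeval, neg_neg]; ring
  have hQe0 : Qe ≠ 0 := by
    intro h
    have := hQepos 0 h0I
    rw [h] at this; simp at this
  -- reduced coprime pair
  obtain ⟨P₁, Q₁, hcop, hP₁n, hQ₁m, hQ₁Ipos, hquot⟩ :
      ∃ P₁ Q₁ : Polynomial ℝ, IsCoprime P₁ Q₁ ∧ P₁.natDegree ≤ n ∧ Q₁.natDegree ≤ m ∧
        (∀ x ∈ I, 0 < Q₁.eval x) ∧
        (∀ x ∈ I, P₁.eval x / Q₁.eval x = Pe.eval x / Qe.eval x) := by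
    set g := GCDMonoid.gcd Pe Qe with hgdef
    have hg0 : g ≠ 0 := gcd_ne_zero_of_right hQe0
    set A := Pe / g with hAdef
    set Bq := Qe / g with hBdef
    have hcop : IsCoprime A Bq := isCoprime_div_gcd_div_gcd hQe0
    have hPeA : g * A = Pe := EuclideanDomain.mul_div_cancel' hg0 (gcd_dvd_left _ _)
    have hQeB : g * Bq = Qe := EuclideanDomain.mul_div_cancel' hg0 (gcd_dvd_right _ _)
    have hAdeg : A.natDegree ≤ n := by
      by_cases hA0 : A = 0
      · simp [hA0]
      · have h1 : Pe.natDegree = g.natDegree + A.natDegree := by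
          rw [← hPeA, natDegree_mul hg0 hA0]
        omega
    have hBdeg : Bq.natDegree ≤ m := by
      by_cases hB0 : Bq = 0
      · simp [hB0]
      · have h1 : Qe.natDegree = g.natDegree + Bq.natDegree := by
          rw [← hQeB, natDegree_mul hg0 hB0]
        omega
    have hgI : ∀ x ∈ I, g.eval x ≠ 0 := by
      intro x hx h
      have h1 := hQepos x hx
      rw [← hQeB, eval_mul, h, zero_mul] at h1
      exact lt_irrefl 0 h1
    have hBI : ∀ x ∈ I, Bq.eval x ≠ 0 := by
      intro x hx h
      have h1 := hQepos x hx
      rw [← hQeB, eval_mul, h, mul_zero] at h1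
      exact lt_irrefl 0 h1
    have hquot' : ∀ x ∈ I, A.eval x / Bq.eval x = Pe.eval x / Qe.eval x := by
      intro x hx
      rw [← hPeA, ← hQeB, eval_mul, eval_mul, mul_div_mul_left _ _ (hgI x hx)]
    rcases poly_sign_const hIpc hBI with hp | hn'
    · exact ⟨A, Bq, hcop, hAdeg, hBdeg, hp, hquot'⟩
    · refine ⟨-A, -Bq, hcop.neg_neg, by simpa using hAdeg, by simpa using hBdeg, ?_, ?_⟩
      · intro x hx; rw [eval_neg]; linarith [hn' x hx]
      · intro x hx; rw [eval_neg, eval_neg, neg_div_neg_eq]; exact hquot' x hx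
  have hQ₁0 : Q₁ ≠ 0 := by
    intro h
    have := hQ₁Ipos 0 h0I
    rw [h] at this; simp at this
  set W : ℝ → ℝ := fun x => P₁.eval x / Q₁.eval x with hWdef
  have hWI : ∀ x ∈ I, W x = Pe.eval x / Qe.eval x := hquot
  have hWeven : ∀ x ∈ I, W (-x) = W x := by
    intro x hx
    rw [hWI _ (hsym x hx), hPeeven, hQeeven, ← hWI x hx]
  -- mediant decomposition
  have hmed : ∀ x ∈ I, f x - W x
      = (Q.eval x / Qe.eval x) * (f x - P.eval x / Q.eval x)
        + (1 - Q.eval x / Qe.eval x) * (f x - P.eval (-x) / Q.eval (-x)) := by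
    intro x hx
    have hb : 0 < Q.eval x := hQpos x hx
    have hd : 0 < Q.eval (-x) := hQpos _ (hsym x hx)
    rw [hWI x hx, hPeval x, hQeval x]
    field_simp
    ring
  have hlmem : ∀ x ∈ I, 0 < Q.eval x / Qe.eval x ∧ Q.eval x / Qe.eval x < 1 := by
    intro x hx
    have hb : 0 < Q.eval x := hQpos x hx
    have hd : 0 < Q.eval (-x) := hQpos _ (hsym x hx)
    have he : 0 < Qe.eval x := hQepos x hx
    constructor
    · exact div_pos hb he
    · rw [div_lt_one he, hQeval]; linarith
  have huv : ∀ x ∈ I, |f x - P.eval x / Q.eval x| ≤ E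
      ∧ |f x - P.eval (-x) / Q.eval (-x)| ≤ E := by
    intro x hx
    have hx' := hsym x hx
    constructor
    · rw [← hRPQ x hx]; exact hEpt x hx
    · rw [← hRPQ (-x) hx', ← hfeven x hx]; exact hEpt (-x) hx'
  have hWle : ∀ x ∈ I, |f x - W x| ≤ E := by
    intro x hx
    obtain ⟨hu, hv⟩ := huv x hx
    obtain ⟨hl0, hl1⟩ := hlmem x hx
    rw [hmed x hx]
    calc |(Q.eval x / Qe.eval x) * (f x - P.eval x / Q.eval x)
        + (1 - Q.eval x / Qe.eval x) * (f x - P.eval (-x) / Q.eval (-x))|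
        ≤ |(Q.eval x / Qe.eval x) * (f x - P.eval x / Q.eval x)|
          + |(1 - Q.eval x / Qe.eval x) * (f x - P.eval (-x) / Q.eval (-x))| := abs_add_le _ _
      _ = (Q.eval x / Qe.eval x) * |f x - P.eval x / Q.eval x|
          + (1 - Q.eval x / Qe.eval x) * |f x - P.eval (-x) / Q.eval (-x)| := by
          have hl1' : (0:ℝ) ≤ 1 - Q.eval x / Qe.eval x := by linarith
          rw [abs_mul, abs_mul, abs_of_pos hl0, abs_of_nonneg hl1']
      _ ≤ (Q.eval x / Qe.eval x) * E + (1 - Q.eval x / Qe.eval x) * E := by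
          exact add_le_add (mul_le_mul_of_nonneg_left hu hl0.le)
            (mul_le_mul_of_nonneg_left hv (by linarith))
      _ = E := by ring
  have hWeq : ∀ x ∈ I, |f x - W x| = E →
      P.eval x / Q.eval x = P.eval (-x) / Q.eval (-x) ∧ W x = P.eval x / Q.eval x := by
    intro x hx heq
    obtain ⟨hu, hv⟩ := huv x hx
    obtain ⟨hl0, hl1⟩ := hlmem x hx
    have habs : E ≤ |(Q.eval x / Qe.eval x) * (f x - P.eval x / Q.eval x)
        + (1 - Q.eval x / Qe.eval x) * (f x - P.eval (-x) / Q.eval (-x))| := by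
      rw [← hmed x hx, heq]
    have huveq := conv_eq hu hv hl0 hl1 habs
    have h1 : P.eval x / Q.eval x = P.eval (-x) / Q.eval (-x) := by linarith
    refine ⟨h1, ?_⟩
    have h2 := hmed x hx
    rw [← h1] at h2
    have h3 : f x - W x = f x - P.eval x / Q.eval x := by rw [h2]; ring
    linarith
  -- the difference polynomial
  set N := P * Q₁ - P₁ * Q with hNdef
  by_cases hN : N = 0
  · -- R agrees with the even function W on I
    have hRW : ∀ x ∈ I, P.eval x / Q.eval x = W x := by
      intro x hx
      have h1 : P.eval x * Q₁.eval x - P₁.eval x * Q.eval x = 0 := by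
        have hh := congrArg (eval x) hN
        rw [hNdef] at hh
        simpa using hh
      show P.eval x / Q.eval x = P₁.eval x / Q₁.eval x
      rw [div_eq_div_iff (hQpos x hx).ne' (hQ₁Ipos x hx).ne']
      linarith
    intro x hx
    have hx' := hsym x hx
    rw [hRPQ _ hx', hRPQ _ hx, hRW _ hx', hRW _ hx, hWeven x hx]
  · -- perturbation argument leading to contradiction
    exfalso
    -- critical set
    have hKsub : ∀ z, z ∈ I ∧ |f z - W z| = E → N.eval z = 0 := by
      rintro z ⟨hz, hze⟩
      obtain ⟨h1, h2⟩ := hWeq z hz hze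
      have h3 : P₁.eval z / Q₁.eval z = P.eval z / Q.eval z := by
        simp only [hWdef] at h2
        exact h2
      have h4 := (div_eq_div_iff (hQ₁Ipos z hz).ne' (hQpos z hz).ne').mp h3
      rw [hNdef]
      simp only [eval_sub, eval_mul]
      linarith
    set K : Set ℝ := {z | z ∈ I ∧ |f z - W z| = E} with hKdef
    have hKfin : K.Finite :=
      Set.Finite.subset (N.finite_setOf_isRoot hN) (fun z hz => hKsub z hz)
    set Kf := hKfin.toFinset with hKfdef
    have hKfmem : ∀ z, z ∈ Kf ↔ (z ∈ I ∧ |f z - W z| = E) := by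
      intro z
      rw [hKfdef, Set.Finite.mem_toFinset]
      rfl
    have hcard : Kf.card ≤ N.natDegree := by
      have hsubroots : Kf ⊆ N.roots.toFinset := by
        intro z hz
        rw [Multiset.mem_toFinset, mem_roots']
        exact ⟨hN, hKsub z ((hKfmem z).1 hz)⟩
      calc Kf.card ≤ N.roots.toFinset.card := Finset.card_le_card hsubroots
        _ ≤ Multiset.card N.roots := Multiset.toFinset_card_le _
        _ ≤ N.natDegree := card_roots' N
    set h₀ := Lagrange.interpolate Kf id (fun z => f z - W z) with hh₀def
    have hinj : Set.InjOn id (Kf : Set ℝ) := fun a _ b _ h => h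
    have hh₀eval : ∀ z ∈ Kf, h₀.eval z = f z - W z := by
      intro z hz
      have h := Lagrange.eval_interpolate_at_node (fun z => f z - W z) hinj hz
      rw [hh₀def]
      exact h
    have hh₀cond : h₀ = 0 ∨ h₀.natDegree < N.natDegree := by
      by_cases h0 : h₀ = 0
      · exact Or.inl h0
      · right
        have hdeg := Lagrange.degree_interpolate_lt (fun z => f z - W z) hinj
        have h1 : h₀.natDegree < Kf.card := by
          rw [natDegree_lt_iff_degree_lt h0]
          rw [hh₀def]
          exact_mod_cast hdeg
        omega
    obtain ⟨p, q, hpn, hqm, hpq⟩ := bez_main hcop hQ₁0 hP₁n hQ₁m hPn hQm hNdef hN hh₀cond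
    -- constants
    obtain ⟨x₁, hx₁I, hx₁min⟩ := hIcp.exists_isMinOn hIne (Polynomial.continuous Q₁).continuousOn
    set κ := Q₁.eval x₁ with hκdef
    have hκpos : 0 < κ := hQ₁Ipos x₁ hx₁I
    have hκle : ∀ x ∈ I, κ ≤ Q₁.eval x := fun x hx => hx₁min hx
    obtain ⟨x₂, hx₂I, hx₂max⟩ := hIcp.exists_isMaxOn hIne (Polynomial.continuous Q₁).continuousOn
    set Λ := Q₁.eval x₂ with hΛdef
    have hΛge : ∀ x ∈ I, Q₁.eval x ≤ Λ := fun x hx => hx₂max hx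
    have hκΛ : κ ≤ Λ := hκle x₂ hx₂I
    have hΛpos : 0 < Λ := lt_of_lt_of_le hκpos hκΛ
    obtain ⟨Hb₀, hHb₀⟩ := hIcp.exists_bound_of_continuousOn (Polynomial.continuous h₀).continuousOn
    set Hb := max Hb₀ 0 with hHbdef
    have hHb : ∀ x ∈ I, |h₀.eval x| ≤ Hb := by
      intro x hx
      calc |h₀.eval x| = ‖h₀.eval x‖ := (Real.norm_eq_abs _).symm
        _ ≤ Hb₀ := hHb₀ x hx
        _ ≤ Hb := le_max_left _ _
    have hHb0 : 0 ≤ Hb := le_max_right _ _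
    obtain ⟨qb₀, hqb₀⟩ := hIcp.exists_bound_of_continuousOn (Polynomial.continuous q).continuousOn
    set qb := max qb₀ 0 with hqbdef
    have hqb : ∀ x ∈ I, |q.eval x| ≤ qb := by
      intro x hx
      calc |q.eval x| = ‖q.eval x‖ := (Real.norm_eq_abs _).symm
        _ ≤ qb₀ := hqb₀ x hx
        _ ≤ qb := le_max_left _ _
    have hqb0 : 0 ≤ qb := le_max_right _ _
    -- the gap δ away from the critical set
    have hWcont : ContinuousOn W I :=
      ((Polynomial.continuous P₁).continuousOn).div
        ((Polynomial.continuous Q₁).continuousOn) (fun x hx => (hQ₁Ipos x hx).ne')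
    have hecont : ContinuousOn (fun x => f x - W x) I := hf.sub hWcont
    obtain ⟨δ, hδpos, hδ⟩ :
        ∃ δ, 0 < δ ∧ ∀ x ∈ I, h₀.eval x * (f x - W x) ≤ E^2/2 → |f x - W x| ≤ E - δ := by
      have hφcont : ContinuousOn (fun x => h₀.eval x * (f x - W x)) I :=
        ((Polynomial.continuous h₀).continuousOn).mul hecont
      set C' := I ∩ (fun x => h₀.eval x * (f x - W x)) ⁻¹' (Set.Iic (E^2/2)) with hC'def
      have hC'mem : ∀ x, x ∈ C' ↔ (x ∈ I ∧ h₀.eval x * (f x - W x) ≤ E^2/2) := by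
        intro x
        rw [hC'def]
        simp [Set.mem_Iic]
      have hC'closed : IsClosed C' :=
        hφcont.preimage_isClosed_of_isClosed isClosed_Icc isClosed_Iic
      have hC'cp : IsCompact C' := hIcp.of_isClosed_subset hC'closed Set.inter_subset_left
      rcases C'.eq_empty_or_nonempty with hemp | hne'
      · refine ⟨E, hEpos, fun x hx hcond => ?_⟩
        exact absurd ((hC'mem x).mpr ⟨hx, hcond⟩) (by rw [hemp]; simp)
      · obtain ⟨x₀, hx₀C, hx₀max⟩ := hC'cp.exists_isMaxOn hne'
          ((hecont.mono Set.inter_subset_left).abs)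
        have hx₀I : x₀ ∈ I := hx₀C.1
        have hx₀lt : |f x₀ - W x₀| < E := by
          rcases lt_or_eq_of_le (hWle x₀ hx₀I) with h | h
          · exact h
          · exfalso
            have hk : x₀ ∈ Kf := (hKfmem x₀).2 ⟨hx₀I, h⟩
            have h1 : h₀.eval x₀ * (f x₀ - W x₀) = (f x₀ - W x₀) * (f x₀ - W x₀) := by
              rw [hh₀eval x₀ hk]
            have h2 : (f x₀ - W x₀) * (f x₀ - W x₀) = E^2 := by
              have hs := sq_abs (f x₀ - W x₀)
              rw [h] at hs
              linear_combination -hs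
            have h3 := ((hC'mem x₀).1 hx₀C).2
            rw [h1, h2] at h3
            nlinarith only [h3, hEpos]
        refine ⟨E - |f x₀ - W x₀|, by linarith, ?_⟩
        intro x hx hcond
        have hxC : x ∈ C' := (hC'mem x).mpr ⟨hx, hcond⟩
        have h5 : |f x - W x| ≤ |f x₀ - W x₀| := hx₀max hxC
        linarith
    -- choice of ε and γ
    set ε := min (min (κ/(2*(qb+1))) (E*κ^2/(4*(Hb+1)))) (min (δ*κ^2/(4*(Hb+1))) (Λ^2))
      with hεdef
    have hεpos : 0 < ε := by
      apply lt_min <;> apply lt_min <;> positivity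
    have hε1 : ε ≤ κ/(2*(qb+1)) := le_trans (min_le_left _ _) (min_le_left _ _)
    have hε2 : ε ≤ E*κ^2/(4*(Hb+1)) := le_trans (min_le_left _ _) (min_le_right _ _)
    have hε3 : ε ≤ δ*κ^2/(4*(Hb+1)) := le_trans (min_le_right _ _) (min_le_left _ _)
    have hε4 : ε ≤ Λ^2 := le_trans (min_le_right _ _) (min_le_right _ _)
    have hεqb : ε * (qb + 1) ≤ κ/2 := by
      have h1 := (le_div_iff₀ (by positivity : (0:ℝ) < 2*(qb+1))).mp hε1
      nlinarith only [h1]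
    set γ := min (ε*E/(4*Λ^2)) (δ/2) with hγdef
    have hγpos : 0 < γ := lt_min (by positivity) (by positivity)
    -- perturbed rational function
    set Pv := P₁ + C ε * p with hPvdef
    set Qv := Q₁ + C ε * q with hQvdef
    have hQvlow : ∀ x ∈ I, κ/2 ≤ Qv.eval x := by
      intro x hx
      have h1 := hqb x hx
      obtain ⟨h1a, h1b⟩ := abs_le.mp h1
      have h2 := hκle x hx
      rw [hQvdef]
      simp only [eval_add, eval_mul, eval_C]
      have t1 : -(ε*qb) ≤ ε * q.eval x := by nlinarith only [h1a, hεpos.le]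
      have t2 : ε*qb ≤ κ/2 := by nlinarith only [hεqb, hεpos.le]
      linarith only [t1, t2, h2]
    have hQvpos : ∀ x ∈ I, 0 < Qv.eval x := fun x hx =>
      lt_of_lt_of_le (by positivity) (hQvlow x hx)
    set V : ℝ → ℝ := fun x => Pv.eval x / Qv.eval x with hVdef
    have hVrat : IsRatFun (-B) B n m V := by
      refine ⟨Pv, Qv, ?_, ?_, fun x hx => (hQvpos x hx).ne', fun x hx => rfl⟩
      · exact le_trans (natDegree_add_le _ _)
          (max_le hP₁n (le_trans (natDegree_C_mul_le _ _) hpn))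
      · exact le_trans (natDegree_add_le _ _)
          (max_le hQ₁m (le_trans (natDegree_C_mul_le _ _) hqm))
    -- pointwise estimate
    have hest : ∀ x ∈ I, |f x - V x| ≤ E - γ := by
      intro x hx
      have hD1l : κ ≤ Q₁.eval x := hκle x hx
      have hD1u : Q₁.eval x ≤ Λ := hΛge x hx
      have hD1pos : 0 < Q₁.eval x := hQ₁Ipos x hx
      have hD2l : κ/2 ≤ Qv.eval x := hQvlow x hx
      have hD2pos : 0 < Qv.eval x := hQvpos x hx
      have hD2u : Qv.eval x ≤ 2*Λ := by
        rw [hQvdef]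
        simp only [eval_add, eval_mul, eval_C]
        obtain ⟨h1a, h1b⟩ := abs_le.mp (hqb x hx)
        have t2 : ε*qb ≤ κ/2 := by nlinarith only [hεqb, hεpos.le]
        have t3 : ε * q.eval x ≤ ε*qb := by nlinarith only [h1b, hεpos.le]
        linarith only [t2, t3, hD1u, hκΛ, hΛpos]
      have hnum : Pv.eval x * Q₁.eval x - P₁.eval x * Qv.eval x = ε * h₀.eval x := by
        have hpqx := congrArg (eval x) hpq
        simp only [eval_sub, eval_mul] at hpqx
        rw [hPvdef, hQvdef]
        simp only [eval_add, eval_mul, eval_C]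
        linear_combination ε * hpqx
      have hVW : f x - V x = (f x - W x) - (ε / (Q₁.eval x * Qv.eval x)) * h₀.eval x := by
        have hdiff : V x - W x = ε * h₀.eval x / (Q₁.eval x * Qv.eval x) := by
          show Pv.eval x / Qv.eval x - P₁.eval x / Q₁.eval x = _
          rw [div_sub_div _ _ hD2pos.ne' hD1pos.ne']
          rw [div_eq_div_iff (by positivity) (by positivity)]
          linear_combination (Qv.eval x * Q₁.eval x) * hnum
        have : (ε / (Q₁.eval x * Qv.eval x)) * h₀.eval x
            = ε * h₀.eval x / (Q₁.eval x * Qv.eval x) := by ring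
        linarith [hdiff]
      set ρ := ε / (Q₁.eval x * Qv.eval x) with hρdef
      have hρpos : 0 < ρ := div_pos hεpos (by positivity)
      have hD12u : Q₁.eval x * Qv.eval x ≤ 2*Λ^2 := by
        nlinarith only [hD1u, hD2u, hD1pos, hD2pos, hΛpos]
      have hD12l : κ * (κ/2) ≤ Q₁.eval x * Qv.eval x :=
        mul_le_mul hD1l hD2l (by positivity) hD1pos.le
      have hρl : ε/(2*Λ^2) ≤ ρ := by
        rw [hρdef, div_le_div_iff₀ (by positivity) (mul_pos hD1pos hD2pos)]
        exact mul_le_mul_of_nonneg_left hD12u hεpos.le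
      have hρu : ρ ≤ 2*ε/κ^2 := by
        rw [hρdef, div_le_div_iff₀ (mul_pos hD1pos hD2pos) (by positivity)]
        nlinarith only [mul_le_mul_of_nonneg_left hD12l hεpos.le]
      have hsmallE : (2*ε/κ^2) * Hb ≤ E/2 := by
        have h1 : ε * (4*(Hb+1)) ≤ E*κ^2 := by
          rw [le_div_iff₀ (by positivity)] at hε2
          linarith only [hε2]
        rw [div_mul_eq_mul_div, div_le_iff₀ (by positivity : (0:ℝ) < κ^2)]
        nlinarith only [h1, hεpos.le, hHb0, hκpos]
      have hsmallδ : (2*ε/κ^2) * Hb ≤ δ/2 := by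
        have h1 : ε * (4*(Hb+1)) ≤ δ*κ^2 := by
          rw [le_div_iff₀ (by positivity)] at hε3
          linarith only [hε3]
        rw [div_mul_eq_mul_div, div_le_iff₀ (by positivity : (0:ℝ) < κ^2)]
        nlinarith only [h1, hεpos.le, hHb0, hκpos]
      by_cases hU : E^2/2 < h₀.eval x * (f x - W x)
      · have he : |f x - W x| ≤ E := hWle x hx
        have hh₀x : E/2 < |h₀.eval x| := by
          have h1 : h₀.eval x * (f x - W x) ≤ |h₀.eval x| * E := by
            calc h₀.eval x * (f x - W x) ≤ |h₀.eval x * (f x - W x)| := le_abs_self _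
              _ = |h₀.eval x| * |f x - W x| := abs_mul _ _
              _ ≤ |h₀.eval x| * E := mul_le_mul_of_nonneg_left he (abs_nonneg _)
          nlinarith only [h1, hU, hEpos]
        have hsign : 0 < (f x - W x) * (ρ * h₀.eval x) := by
          have h1 : 0 < h₀.eval x * (f x - W x) := lt_trans (by positivity) hU
          calc (0:ℝ) < ρ * (h₀.eval x * (f x - W x)) := mul_pos hρpos h1
            _ = (f x - W x) * (ρ * h₀.eval x) := by ring
        have hw_lb : γ ≤ |ρ * h₀.eval x| := by
          rw [abs_mul, abs_of_pos hρpos]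
          have h1 : ε/(2*Λ^2) * (E/2) ≤ ρ * |h₀.eval x| :=
            mul_le_mul hρl hh₀x.le (by positivity) hρpos.le
          calc γ ≤ ε*E/(4*Λ^2) := min_le_left _ _
            _ = ε/(2*Λ^2) * (E/2) := by ring
            _ ≤ ρ * |h₀.eval x| := h1
        have hw_ub : |ρ * h₀.eval x| ≤ E - γ := by
          rw [abs_mul, abs_of_pos hρpos]
          have h1 : ρ * |h₀.eval x| ≤ (2*ε/κ^2) * Hb :=
            mul_le_mul hρu (hHb x hx) (abs_nonneg _) (by positivity)
          have h3 : γ ≤ E/2 := by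
            calc γ ≤ ε*E/(4*Λ^2) := min_le_left _ _
              _ ≤ E/2 := by
                rw [div_le_div_iff₀ (by positivity) (by norm_num : (0:ℝ) < 2)]
                nlinarith only [hε4, hΛpos, hEpos]
          linarith
        rw [hVW]
        exact abs_sub_le_of_same_sign he hsign hw_lb hw_ub
      · have hfar : |f x - W x| ≤ E - δ := hδ x hx (le_of_not_gt hU)
        have h1 : |ρ * h₀.eval x| ≤ δ/2 := by
          rw [abs_mul, abs_of_pos hρpos]
          calc ρ * |h₀.eval x| ≤ (2*ε/κ^2) * Hb :=
              mul_le_mul hρu (hHb x hx) (abs_nonneg _) (by positivity)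
            _ ≤ δ/2 := hsmallδ
        have hγδ : γ ≤ δ/2 := min_le_right _ _
        rw [hVW]
        calc |(f x - W x) - ρ * h₀.eval x| ≤ |f x - W x| + |ρ * h₀.eval x| := by
              rw [sub_eq_add_neg]
              exact le_trans (abs_add_le _ _) (by rw [abs_neg])
          _ ≤ (E - δ) + δ/2 := add_le_add hfar h1
          _ ≤ E - γ := by linarith
    -- contradiction with optimality
    have h1 : E ≤ ⨆ y : I, |f y.1 - V y.1| := hbest V hVrat
    have h2 : (⨆ y : I, |f y.1 - V y.1|) ≤ E - γ := ciSup_le (fun y => hest y.1 y.2)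
    linarith
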